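/- Let α > 1, 0 < β < 1, and M > 1 be real numbers. Then the two-dimensional Lebesgue measure of the set { (x, y) ∈ (0,1) × (0,1) : β·y / (α·x + y)² > M } equals β² / (6·α·M²). -/

import Mathlib

open Set MeasureTheory

/-- Proposition 2.8 (first part): the area of the `M`-sensitive region
`Ω_M(p(ω), p(ω_uv))` of the `K`-tuple Plackett–Luce model is `β²/(6αM²)`. -/
theorem stmt_14 (α β M : ℝ) (hα : 1 < α) (hβ0 : 0 < β) (hβ1 : β < 1) (hM : 1 < M) :
    volume {p : ℝ × ℝ | p.1 ∈ Ioo (0 : ℝ) 1 ∧ p.2 ∈ Ioo (0 : ℝ) 1 ∧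
        β * p.2 / (α * p.1 + p.2) ^ 2 > M} =
      ENNReal.ofReal (β ^ 2 / (6 * α * M ^ 2)) := by
  have hM0 : (0:ℝ) < M := lt_trans one_pos hM
  have hα0 : (0:ℝ) < α := lt_trans one_pos hα
  set c : ℝ := β / M with hc_def
  have hc0 : 0 < c := div_pos hβ0 hM0
  have hc1 : c < 1 := by
    rw [hc_def, div_lt_one hM0]; linarith
  set g : ℝ → ℝ := fun y => (Real.sqrt c * Real.sqrt y - y) / α with hg_def
  have hsqrt : ∀ y : ℝ, 0 ≤ y → Real.sqrt c * Real.sqrt y = Real.sqrt (β * y / M) := by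
    intro y hy
    rw [← Real.sqrt_mul hc0.le]
    congr 1
    rw [hc_def]
    field_simp
  -- set equality
  have hset : {p : ℝ × ℝ | p.1 ∈ Ioo (0 : ℝ) 1 ∧ p.2 ∈ Ioo (0 : ℝ) 1 ∧
        β * p.2 / (α * p.1 + p.2) ^ 2 > M} =
      Prod.swap ⁻¹' regionBetween (fun _ => (0:ℝ)) g (Ioo 0 c) := by
    ext ⟨x, y⟩
    simp only [mem_setOf_eq, mem_Ioo, mem_preimage, Prod.swap_prod_mk, regionBetween,
      mem_setOf_eq, mem_Ioo]
    constructor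
    · rintro ⟨⟨hx0, hx1⟩, ⟨hy0, hy1⟩, hineq⟩
      have ht0 : 0 < α * x + y := by positivity
      have ht2 : (α * x + y) ^ 2 < β * y / M := by
        rw [gt_iff_lt, lt_div_iff₀ (by positivity)] at hineq
        rw [lt_div_iff₀ hM0]
        linarith
      have htlt : α * x + y < Real.sqrt (β * y / M) :=
        (Real.lt_sqrt ht0.le).mpr ht2
      have hylt : y < Real.sqrt (β * y / M) := by
        nlinarith
      have hyc : y < c := by
        have h3 := (Real.lt_sqrt hy0.le).mp hylt
        rw [lt_div_iff₀ hM0] at h3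
        rw [hc_def, lt_div_iff₀ hM0]
        nlinarith
      refine ⟨⟨hy0, hyc⟩, hx0, ?_⟩
      rw [hg_def]
      simp only
      rw [lt_div_iff₀ hα0, hsqrt y hy0.le]
      linarith
    · rintro ⟨⟨hy0, hyc⟩, hx0, hxg⟩
      have hy1 : y < 1 := lt_trans hyc hc1
      rw [hg_def] at hxg
      simp only at hxg
      rw [lt_div_iff₀ hα0, hsqrt y hy0.le] at hxg
      have htlt : α * x + y < Real.sqrt (β * y / M) := by linarith
      have ht0 : 0 < α * x + y := by positivity
      have ht2 : (α * x + y) ^ 2 < β * y / M :=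
        (Real.lt_sqrt ht0.le).mp htlt
      have hx1 : x < 1 := by
        have h1 : Real.sqrt (β * y / M) < 1 := by
          rw [show (1:ℝ) = Real.sqrt 1 by simp]
          apply Real.sqrt_lt_sqrt (by positivity)
          rw [div_lt_one hM0]
          nlinarith
        nlinarith
      refine ⟨⟨hx0, hx1⟩, ⟨hy0, hy1⟩, ?_⟩
      rw [gt_iff_lt, lt_div_iff₀ (by positivity)]
      rw [lt_div_iff₀ hM0] at ht2
      linarith
  -- continuity / integrability of g
  have hgcont : Continuous g := by
    rw [hg_def]
    continuity
  have hg_int : IntegrableOn g (Ioo 0 c) volume :=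
    (hgcont.integrableOn_Icc).mono_set Ioo_subset_Icc_self
  have hf_int : IntegrableOn (fun _ : ℝ => (0:ℝ)) (Ioo 0 c) volume :=
    (integrableOn_const_iff (C := (0:ℝ))).mpr (Or.inr measure_Ioo_lt_top)
  have hfg : ∀ y ∈ Ioo (0:ℝ) c, (0:ℝ) ≤ g y := by
    rintro y ⟨hy0, hyc⟩
    rw [hg_def]
    simp only
    apply div_nonneg _ hα0.le
    have : y < Real.sqrt c * Real.sqrt y := by
      rw [hsqrt y hy0.le]
      apply (Real.lt_sqrt hy0.le).mpr
      rw [hc_def, lt_div_iff₀ hM0] at hyc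
      rw [lt_div_iff₀ hM0]
      nlinarith
    linarith
  -- compute the integral
  have hint : ∫ y in Ioo (0:ℝ) c, g y = β ^ 2 / (6 * α * M ^ 2) := by
    rw [← integral_Ioc_eq_integral_Ioo, ← intervalIntegral.integral_of_le hc0.le]
    have h2 : ∫ y in (0:ℝ)..c, g y
        = (Real.sqrt c * ∫ y in (0:ℝ)..c, Real.sqrt y) / α - (∫ y in (0:ℝ)..c, y) / α := by
      rw [hg_def]
      simp only
      rw [intervalIntegral.integral_div, intervalIntegral.integral_sub, intervalIntegral.integral_const_mul, sub_div]
      · exact (continuous_const.mul Real.continuous_sqrt).intervalIntegrable 0 c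
      · exact continuous_id.intervalIntegrable 0 c
    rw [h2, integral_id]
    have hsq : ∫ y in (0:ℝ)..c, Real.sqrt y = 2 / 3 * c ^ ((3:ℝ)/2) := by
      have h3 : ∀ y ∈ Set.uIcc (0:ℝ) c, Real.sqrt y = y ^ ((1:ℝ)/2) := fun y _ =>
        Real.sqrt_eq_rpow y
      rw [intervalIntegral.integral_congr h3, integral_rpow (r := (1:ℝ)/2) (Or.inl (by norm_num))]
      rw [Real.zero_rpow (by norm_num)]
      rw [show ((1:ℝ)/2 + 1) = 3/2 by norm_num]
      rw [div_eq_iff (by norm_num : ((3:ℝ)/2) ≠ 0)]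
      ring
    rw [hsq]
    have hcs : Real.sqrt c * (2 / 3 * c ^ ((3:ℝ)/2)) = 2 / 3 * c ^ 2 := by
      rw [Real.sqrt_eq_rpow, ← mul_assoc, mul_comm (c ^ ((1:ℝ)/2)) (2/3), mul_assoc,
        ← Real.rpow_add hc0, show ((1:ℝ)/2 + 3/2) = ((2:ℕ):ℝ) by norm_num, Real.rpow_natCast]
    rw [hcs, hc_def]
    field_simp
    ring
  -- put it all together
  rw [hset]
  have hswap : MeasurePreserving (Prod.swap : ℝ × ℝ → ℝ × ℝ) volume volume := by
    rw [Measure.volume_eq_prod ℝ ℝ]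
    exact Measure.measurePreserving_swap
  have hmeas : MeasurableSet (regionBetween (fun _ => (0:ℝ)) g (Ioo 0 c)) :=
    measurableSet_regionBetween measurable_const hgcont.measurable measurableSet_Ioo
  rw [hswap.measure_preimage hmeas.nullMeasurableSet]
  rw [show (volume : Measure (ℝ × ℝ)) = (volume : Measure ℝ).prod volume from Measure.volume_eq_prod ℝ ℝ]
  rw [volume_regionBetween_eq_integral hf_int hg_int measurableSet_Ioo hfg]
  simp only [Pi.sub_apply, sub_zero]
  rw [hint]
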